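/- If σ is a density matrix on ℂ^n with σ_c = diag(σ) positive definite, then among all positive definite diagonal density matrices ρ, the divergence D(σ||ρ) is minimized uniquely at ρ = σ_c. -/

import Mathlib

open scoped ComplexOrder
open Matrix

/-- The diagonal part of a matrix in the standard basis. -/
def diagPart {n : ℕ} (B : Matrix (Fin n) (Fin n) ℂ) : Matrix (Fin n) (Fin n) ℂ :=
  Matrix.diagonal (fun j => B j j)

/-- Logarithm of a matrix via the spectral decomposition (0 for non-Hermitian input);
    since `Real.log 0 = 0` this incorporates the convention `0 * ln 0 = 0`. -/
noncomputable def matLog {n : ℕ} (A : Matrix (Fin n) (Fin n) ℂ) : Matrix (Fin n) (Fin n) ℂ :=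
  if h : A.IsHermitian then
    (h.eigenvectorUnitary : Matrix (Fin n) (Fin n) ℂ)
      * Matrix.diagonal (fun i => (Real.log (h.eigenvalues i) : ℂ))
      * star (h.eigenvectorUnitary : Matrix (Fin n) (Fin n) ℂ)
  else 0

/-- Quantum relative entropy `D(σ‖ρ) = Tr σ ln σ - Tr σ ln ρ`. -/
noncomputable def relEnt {n : ℕ} (σ ρ : Matrix (Fin n) (Fin n) ℂ) : ℝ :=
  ((σ * matLog σ).trace - (σ * matLog ρ).trace).re

lemma matLog_diagonal {n : ℕ} (d : Fin n → ℝ) :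
    matLog (Matrix.diagonal (fun j => (d j : ℂ))) =
      Matrix.diagonal (fun j => (Real.log (d j) : ℂ)) := by
  have hA : (Matrix.diagonal (fun j => (d j : ℂ))).IsHermitian :=
    Matrix.isHermitian_diagonal_iff.2 fun i => by
      simp [_root_.IsSelfAdjoint, Complex.conj_ofReal]
  rw [matLog, dif_pos hA]
  set U : Matrix (Fin n) (Fin n) ℂ := (hA.eigenvectorUnitary : Matrix (Fin n) (Fin n) ℂ) with hU
  have hUU : U * star U = 1 := Matrix.mem_unitaryGroup_iff.mp hA.eigenvectorUnitary.2
  have hUU' : star U * U = 1 := Matrix.mem_unitaryGroup_iff'.mp hA.eigenvectorUnitary.2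
  have hAU : Matrix.diagonal (fun j => (d j : ℂ)) * U
      = U * Matrix.diagonal (RCLike.ofReal ∘ hA.eigenvalues) := by
    conv_lhs => rw [hA.spectral_theorem, Unitary.conjStarAlgAut_apply]
    rw [mul_assoc, mul_assoc, hUU', mul_one]
  have key : ∀ j k, (d j : ℂ) * U j k = U j k * (hA.eigenvalues k : ℂ) := by
    intro j k
    have := congrFun (congrFun hAU j) k
    simpa [Matrix.diagonal_mul, Matrix.mul_diagonal] using this
  have comm : Matrix.diagonal (fun j => (Real.log (d j) : ℂ)) * U
      = U * Matrix.diagonal (fun i => (Real.log (hA.eigenvalues i) : ℂ)) := by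
    ext j k
    simp only [Matrix.diagonal_mul, Matrix.mul_diagonal]
    rcases eq_or_ne (U j k) 0 with h | h
    · simp [h]
    · have hd : (d j : ℂ) = (hA.eigenvalues k : ℂ) := by
        have hk := key j k
        rw [mul_comm (U j k)] at hk
        exact mul_right_cancel₀ h hk
      have : d j = hA.eigenvalues k := by exact_mod_cast hd
      rw [this]; ring
  calc U * Matrix.diagonal (fun i => (Real.log (hA.eigenvalues i) : ℂ)) * star U
      = Matrix.diagonal (fun j => (Real.log (d j) : ℂ)) * U * star U := by rw [comm]
    _ = Matrix.diagonal (fun j => (Real.log (d j) : ℂ)) * (U * star U) := by rw [mul_assoc]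
    _ = _ := by rw [hUU, mul_one]

lemma trace_mul_diagonal_re {n : ℕ} (σ : Matrix (Fin n) (Fin n) ℂ) (c : Fin n → ℝ) :
    ((σ * Matrix.diagonal (fun j => (c j : ℂ))).trace).re
      = ∑ j, (σ j j).re * c j := by
  rw [Matrix.trace, Complex.re_sum]
  refine Finset.sum_congr rfl fun j _ => ?_
  simp [Matrix.diag, Matrix.mul_diagonal, Complex.mul_re]

theorem diag_minimizes_relEnt {n : ℕ} (σ : Matrix (Fin n) (Fin n) ℂ)
    (hσ : σ.PosSemidef) (hσ1 : σ.trace = 1)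
    (hσc : (diagPart σ).PosDef) :
    ∀ ρ : Matrix (Fin n) (Fin n) ℂ, ρ.PosDef → ρ.trace = 1 →
      (∀ j k, j ≠ k → ρ j k = 0) →
      relEnt σ (diagPart σ) ≤ relEnt σ ρ ∧
        (relEnt σ ρ = relEnt σ (diagPart σ) → ρ = diagPart σ) := by
  intro ρ hρ hρ1 hρdiag
  set p : Fin n → ℝ := fun j => (σ j j).re with hp_def
  set q : Fin n → ℝ := fun j => (ρ j j).re with hq_def
  have hρeq0 : ρ = Matrix.diagonal (fun j => ρ j j) := by
    ext j k
    rcases eq_or_ne j k with rfl | h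
    · simp
    · simp [Matrix.diagonal_apply_ne _ h, hρdiag j k h]
  have hσd : ∀ j, 0 < σ j j := by
    rw [diagPart] at hσc
    exact Matrix.posDef_diagonal_iff.mp hσc
  have hρd : ∀ j, 0 < ρ j j := by
    rw [hρeq0] at hρ
    exact Matrix.posDef_diagonal_iff.mp hρ
  have hp : ∀ j, 0 < p j := fun j => by
    simpa using (Complex.lt_def.mp (hσd j)).1
  have hq : ∀ j, 0 < q j := fun j => by
    simpa using (Complex.lt_def.mp (hρd j)).1
  have hσim : ∀ j, (σ j j).im = 0 := fun j => by
    simpa using ((Complex.lt_def.mp (hσd j)).2).symm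
  have hρim : ∀ j, (ρ j j).im = 0 := fun j => by
    simpa using ((Complex.lt_def.mp (hρd j)).2).symm
  have hσcoe : ∀ j, σ j j = ((p j : ℝ) : ℂ) := fun j =>
    Complex.ext (by simp [hp_def]) (by simp [hσim j])
  have hρcoe : ∀ j, ρ j j = ((q j : ℝ) : ℂ) := fun j =>
    Complex.ext (by simp [hq_def]) (by simp [hρim j])
  have hdiagσ : diagPart σ = Matrix.diagonal (fun j => ((p j : ℝ) : ℂ)) := by
    rw [diagPart]; exact congrArg Matrix.diagonal (funext hσcoe)
  have hρeq : ρ = Matrix.diagonal (fun j => ((q j : ℝ) : ℂ)) := by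
    rw [hρeq0]; exact congrArg Matrix.diagonal (funext hρcoe)
  have sum_p : ∑ j, p j = 1 := by
    have := congrArg Complex.re hσ1
    rw [Matrix.trace, Complex.re_sum] at this
    simpa [Matrix.diag] using this
  have sum_q : ∑ j, q j = 1 := by
    have := congrArg Complex.re hρ1
    rw [Matrix.trace, Complex.re_sum] at this
    simpa [Matrix.diag] using this
  have hrel : ∀ c : Fin n → ℝ,
      relEnt σ (Matrix.diagonal (fun j => ((c j : ℝ) : ℂ)))
        = ((σ * matLog σ).trace).re - ∑ j, p j * Real.log (c j) := by
    intro c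
    rw [relEnt, Complex.sub_re, matLog_diagonal, trace_mul_diagonal_re]
  have gibbs_le : ∀ j, p j * (Real.log (q j) - Real.log (p j)) ≤ q j - p j := by
    intro j
    have h1 : Real.log (q j / p j) ≤ q j / p j - 1 :=
      Real.log_le_sub_one_of_pos (div_pos (hq j) (hp j))
    rw [Real.log_div (hq j).ne' (hp j).ne'] at h1
    have h2 := mul_le_mul_of_nonneg_left h1 (hp j).le
    calc p j * (Real.log (q j) - Real.log (p j)) ≤ p j * (q j / p j - 1) := h2
      _ = q j - p j := by rw [mul_sub, mul_one, mul_div_cancel₀ _ (hp j).ne']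
  have sum_diff : ∑ j, (q j - p j) = 0 := by
    rw [Finset.sum_sub_distrib, sum_p, sum_q, sub_self]
  have sum_le : ∑ j, p j * (Real.log (q j) - Real.log (p j)) ≤ 0 := by
    calc ∑ j, p j * (Real.log (q j) - Real.log (p j))
        ≤ ∑ j, (q j - p j) := Finset.sum_le_sum fun j _ => gibbs_le j
      _ = 0 := sum_diff
  have expand : ∑ j, p j * (Real.log (q j) - Real.log (p j))
      = ∑ j, p j * Real.log (q j) - ∑ j, p j * Real.log (p j) := by
    rw [← Finset.sum_sub_distrib]
    exact Finset.sum_congr rfl fun j _ => by ring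
  constructor
  · rw [hdiagσ, hρeq, hrel, hrel]
    have := sum_le
    rw [expand] at this
    linarith
  · intro heq
    rw [hdiagσ, hρeq, hrel, hrel] at heq
    have hsum : ∑ j, p j * (Real.log (q j) - Real.log (p j)) = ∑ j, (q j - p j) := by
      rw [expand, sum_diff]
      linarith
    have hponit := (Finset.sum_eq_sum_iff_of_le fun j _ => gibbs_le j).mp hsum
    have hqp : ∀ j, q j = p j := by
      intro j
      by_contra hne
      have hd1 : q j / p j ≠ 1 := fun h =>
        hne ((div_eq_one_iff_eq (hp j).ne').mp h)
      have hstrict : Real.log (q j / p j) < q j / p j - 1 :=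
        Real.log_lt_sub_one_of_pos (div_pos (hq j) (hp j)) hd1
      rw [Real.log_div (hq j).ne' (hp j).ne'] at hstrict
      have h2 := mul_lt_mul_of_pos_left hstrict (hp j)
      have h3 : p j * (q j / p j - 1) = q j - p j := by
        rw [mul_sub, mul_one, mul_div_cancel₀ _ (hp j).ne']
      have h4 := hponit j (Finset.mem_univ j)
      rw [h3] at h2
      linarith [h2, h4.ge, h4.le]
    rw [hρeq, hdiagσ]
    exact congrArg Matrix.diagonal (funext fun j => by rw [hqp j])
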